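/- (Lemma 3.4) Assume u = w and the hyperbolicity condition B < 0 (equivalently sin(π/u)sin(π/w) < cos(π/v)). Then the midpoint vectors f₀₃ = a₀ + a₃ and f₁₂ = a₁ + a₂ satisfy ⟨f₀₃, f₀₃⟩ = 2(a₀₀ + a₀₃) < 0 and ⟨f₁₂, f₁₂⟩ = 2(a₁₁ + a₁₂) < 0; in particular both F₀₃ and F₁₂ represent proper points of hyperbolic space. -/

import Mathlib

open Real Matrix

set_option maxHeartbeats 1000000

/-- The Coxeter–Schläfli matrix of the complete orthoscheme `W_{uvw}`. -/
noncomputable def CSmatrix (u v w : ℝ) : Matrix (Fin 4) (Fin 4) ℝ :=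
  !![1, -cos (π/u), 0, 0;
     -cos (π/u), 1, -cos (π/v), 0;
     0, -cos (π/v), 1, -cos (π/w);
     0, 0, -cos (π/w), 1]

/-- The inverse of the Coxeter–Schläfli matrix; its entries are the `a_{ij}`. -/
noncomputable def CSinv (u v w : ℝ) : Matrix (Fin 4) (Fin 4) ℝ :=
  (CSmatrix u v w)⁻¹

/-- The adjugate-style explicit matrix used to identify the inverse. -/
noncomputable def CSadj (u v w : ℝ) : Matrix (Fin 4) (Fin 4) ℝ :=
  let c := cos (π/u); let d := cos (π/v); let e := cos (π/w)
  !![1-d^2-e^2, c*(1-e^2), c*d, c*d*e;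
     c*(1-e^2), 1-e^2, d, d*e;
     c*d, d, 1-c^2, e*(1-c^2);
     c*d*e, d*e, e*(1-c^2), 1-c^2-d^2]

lemma CS_det (u v w : ℝ) :
    (CSmatrix u v w).det =
      1 - cos (π/u)^2 - cos (π/v)^2 - cos (π/w)^2 + cos (π/u)^2 * cos (π/w)^2 := by
  simp [CSmatrix, Matrix.det_succ_row_zero, Fin.sum_univ_succ, Fin.succAbove]
  ring

lemma CS_mul_adj (u v w : ℝ) :
    CSmatrix u v w * CSadj u v w = (CSmatrix u v w).det • (1 : Matrix (Fin 4) (Fin 4) ℝ) := by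
  rw [CS_det]
  ext i j
  fin_cases i <;> fin_cases j <;>
    simp [CSmatrix, CSadj, Matrix.mul_apply, Fin.sum_univ_four, Matrix.one_apply] <;> ring

lemma CSinv_eq (u v w : ℝ) (hdet : (CSmatrix u v w).det ≠ 0) :
    CSinv u v w = ((CSmatrix u v w).det)⁻¹ • CSadj u v w := by
  unfold CSinv
  apply Matrix.inv_eq_right_inv
  rw [Matrix.mul_smul, CS_mul_adj, smul_smul, inv_mul_cancel₀ hdet, one_smul]

theorem stmt6 (u v w : ℝ) (hu : 3 ≤ u) (hv : 3 ≤ v) (hw : 3 ≤ w)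
    (hdet : (CSmatrix u v w).det ≠ 0)
    {V : Type*} [AddCommGroup V] [Module ℝ V]
    (Bf : LinearMap.BilinForm ℝ V)
    (hsymm : ∀ x y : V, Bf x y = Bf y x)
    (a : Fin 4 → V)
    (hGram : ∀ i j : Fin 4, Bf (a i) (a j) = CSinv u v w i j)
    (huw : u = w) (hBneg : (CSmatrix u v w).det < 0) :
    Bf (a 0 + a 3) (a 0 + a 3) = 2 * (CSinv u v w 0 0 + CSinv u v w 0 3) ∧
    2 * (CSinv u v w 0 0 + CSinv u v w 0 3) < 0 ∧
    Bf (a 1 + a 2) (a 1 + a 2) = 2 * (CSinv u v w 1 1 + CSinv u v w 1 2) ∧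
    2 * (CSinv u v w 1 1 + CSinv u v w 1 2) < 0 ∧
    Bf (a 0 + a 3) (a 0 + a 3) < 0 ∧
    Bf (a 1 + a 2) (a 1 + a 2) < 0 := by
  subst huw
  have hinv := CSinv_eq u v u hdet
  set B := (CSmatrix u v u).det with hB
  -- basic bounds on the cosines
  have hup : (0:ℝ) < u := by linarith
  have hvp : (0:ℝ) < v := by linarith
  have hπu0 : 0 < π/u := div_pos Real.pi_pos hup
  have hπv0 : 0 < π/v := div_pos Real.pi_pos hvp
  have hπu2 : π/u < π/2 := by
    apply div_lt_div_of_pos_left Real.pi_pos (by norm_num) (by linarith)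
  have hπv2 : π/v < π/2 := by
    apply div_lt_div_of_pos_left Real.pi_pos (by norm_num) (by linarith)
  have hπuπ : π/u ≤ π := by
    nlinarith [Real.pi_pos]
  have hπvπ : π/v ≤ π := by
    nlinarith [Real.pi_pos]
  have hc1 : cos (π/u) < 1 := by
    have := Real.cos_lt_cos_of_nonneg_of_le_pi (le_refl (0:ℝ)) hπuπ hπu0
    simpa using this
  have hd1 : cos (π/v) < 1 := by
    have := Real.cos_lt_cos_of_nonneg_of_le_pi (le_refl (0:ℝ)) hπvπ hπv0
    simpa using this
  have hc0 : 0 < cos (π/u) :=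
    Real.cos_pos_of_mem_Ioo ⟨by linarith, hπu2⟩
  have hd0 : 0 < cos (π/v) :=
    Real.cos_pos_of_mem_Ioo ⟨by linarith, hπv2⟩
  set c := cos (π/u) with hcdef
  set d := cos (π/v) with hddef
  have hBinv : B⁻¹ < 0 := inv_lt_zero.mpr hBneg
  -- explicit entries
  have e00 : CSinv u v u 0 0 = B⁻¹ * (1 - d^2 - c^2) := by
    rw [hinv]; simp [CSadj, hcdef, hddef]
  have e03 : CSinv u v u 0 3 = B⁻¹ * (c * d * c) := by
    rw [hinv]; simp [CSadj, hcdef, hddef]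
  have e11 : CSinv u v u 1 1 = B⁻¹ * (1 - c^2) := by
    rw [hinv]; simp [CSadj, hcdef, hddef]
  have e12 : CSinv u v u 1 2 = B⁻¹ * d := by
    rw [hinv]; simp [CSadj, hcdef, hddef]
  have e33 : CSinv u v u 3 3 = B⁻¹ * (1 - c^2 - d^2) := by
    rw [hinv]; simp [CSadj, hcdef, hddef]
  have e22 : CSinv u v u 2 2 = B⁻¹ * (1 - c^2) := by
    rw [hinv]; simp [CSadj, hcdef, hddef]
  have e30 : CSinv u v u 3 0 = B⁻¹ * (c * d * c) := by
    rw [hinv]; simp [CSadj, hcdef, hddef]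
  have e21 : CSinv u v u 2 1 = B⁻¹ * d := by
    rw [hinv]; simp [CSadj, hcdef, hddef]
  -- bilinear form expansions
  have hexp03 : Bf (a 0 + a 3) (a 0 + a 3) = 2 * (CSinv u v u 0 0 + CSinv u v u 0 3) := by
    simp only [map_add, LinearMap.add_apply, hGram, e00, e03, e33, e30]
    ring
  have hexp12 : Bf (a 1 + a 2) (a 1 + a 2) = 2 * (CSinv u v u 1 1 + CSinv u v u 1 2) := by
    simp only [map_add, LinearMap.add_apply, hGram, e11, e12, e22, e21]
    ring
  have hlt03 : 2 * (CSinv u v u 0 0 + CSinv u v u 0 3) < 0 := by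
    rw [e00, e03]
    have h1 : (0:ℝ) < 1 - d := by linarith
    have h2 : (0:ℝ) < 1 + d - c^2 := by nlinarith
    have hnum : 0 < 1 - d^2 - c^2 + c*d*c := by nlinarith [mul_pos h1 h2]
    nlinarith [mul_neg_of_neg_of_pos hBinv hnum]
  have hlt12 : 2 * (CSinv u v u 1 1 + CSinv u v u 1 2) < 0 := by
    rw [e11, e12]
    have hnum : 0 < 1 - c^2 + d := by nlinarith
    nlinarith [mul_neg_of_neg_of_pos hBinv hnum]
  exact ⟨hexp03, hlt03, hexp12, hlt12, by rw [hexp03]; exact hlt03,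
    by rw [hexp12]; exact hlt12⟩
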